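/- There is a bijection between the set of ℓ-core partitions with largest part equal to k and the set of (ℓ-1)-core partitions with largest part at most k. -/

import Mathlib

/-- The hook length of the box `(a, b)` (0-indexed row `a`, column `b`)
of the Young diagram `μ`: the number of boxes to the right in its row,
plus the number of boxes below in its column, plus one. -/
def hookLen (μ : YoungDiagram) (a b : ℕ) : ℕ :=
  μ.rowLen a + μ.colLen b - a - b - 1

/-- A partition (Young diagram) is an `ℓ`-core when no box has hook length
divisible by `ℓ`. -/
def IsCore (ℓ : ℕ) (μ : YoungDiagram) : Prop :=
  ∀ a b : ℕ, (a, b) ∈ μ → ¬ ℓ ∣ hookLen μ a b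

namespace CoreProof
open YoungDiagram Finset

/-- first-column hook length of row `a` (meaningful for `a < μ.colLen 0`). -/
def xh (μ : YoungDiagram) (a : ℕ) : ℕ := μ.rowLen a + (μ.colLen 0 - a - 1)

/-- `b + (number of rows missing column b)`: the "gap" (coded position) of column `b`. -/
def yh (μ : YoungDiagram) (b : ℕ) : ℕ := b + (μ.colLen 0 - μ.colLen b)

def betaSet (μ : YoungDiagram) : Finset ℕ := (Finset.range (μ.colLen 0)).image (xh μ)

lemma rowLen_pos_iff {μ : YoungDiagram} {a : ℕ} : 0 < μ.rowLen a ↔ a < μ.colLen 0 := by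
  rw [← YoungDiagram.mem_iff_lt_rowLen, YoungDiagram.mem_iff_lt_colLen]

lemma colLen_le_colLen_zero (μ : YoungDiagram) (b : ℕ) : μ.colLen b ≤ μ.colLen 0 :=
  μ.colLen_anti 0 b (Nat.zero_le _)

lemma xh_lt_xh {μ : YoungDiagram} {a a' : ℕ} (h : a < a') (h' : a' < μ.colLen 0) :
    xh μ a' < xh μ a := by
  have h1 := μ.rowLen_anti a a' (le_of_lt h)
  have h2 : 0 < μ.rowLen a' := rowLen_pos_iff.mpr h'
  unfold xh; omega

lemma xh_pos {μ : YoungDiagram} {a : ℕ} (ha : a < μ.colLen 0) : 0 < xh μ a := by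
  have := rowLen_pos_iff.mpr ha
  unfold xh; omega

lemma zero_not_mem_betaSet (μ : YoungDiagram) : 0 ∉ betaSet μ := by
  intro h
  obtain ⟨a, ha, hx⟩ := Finset.mem_image.mp h
  exact absurd (hx ▸ xh_pos (Finset.mem_range.mp ha)) (lt_irrefl 0)

lemma card_betaSet (μ : YoungDiagram) : (betaSet μ).card = μ.colLen 0 := by
  rw [betaSet, Finset.card_image_of_injOn, Finset.card_range]
  intro a ha a' ha' hx
  rcases lt_trichotomy a a' with h | h | h
  · exact absurd hx (Nat.ne_of_gt (xh_lt_xh h (Finset.mem_range.mp ha')))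
  · exact h
  · exact absurd hx (Nat.ne_of_lt (xh_lt_xh h (Finset.mem_range.mp ha)))

lemma xh_le_xh_zero {μ : YoungDiagram} {a : ℕ} (ha : a < μ.colLen 0) : xh μ a ≤ xh μ 0 := by
  rcases Nat.eq_zero_or_pos a with h | h
  · subst h; exact le_refl _
  · exact le_of_lt (xh_lt_xh h ha)

/-- hook length in terms of xh and yh. -/
lemma hook_eq {μ : YoungDiagram} {a b : ℕ} (hab : (a, b) ∈ μ) :
    hookLen μ a b + yh μ b = xh μ a ∧ yh μ b < xh μ a := by
  have h1 : b < μ.rowLen a := YoungDiagram.mem_iff_lt_rowLen.mp hab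
  have h2 : a < μ.colLen b := YoungDiagram.mem_iff_lt_colLen.mp hab
  have h3 := colLen_le_colLen_zero μ b
  unfold hookLen xh yh; omega

lemma yh_not_mem {μ : YoungDiagram} (b : ℕ) : yh μ b ∉ betaSet μ := by
  intro h
  obtain ⟨j, hj, hx⟩ := Finset.mem_image.mp h
  rw [Finset.mem_range] at hj
  have h3 := colLen_le_colLen_zero μ b
  by_cases hm : (j, b) ∈ μ
  · have h1 : b < μ.rowLen j := YoungDiagram.mem_iff_lt_rowLen.mp hm
    have h2 : j < μ.colLen b := YoungDiagram.mem_iff_lt_colLen.mp hm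
    unfold xh yh at hx; omega
  · have h1 : μ.rowLen j ≤ b := le_of_not_gt (fun h => hm (YoungDiagram.mem_iff_lt_rowLen.mpr h))
    have h2 : μ.colLen b ≤ j := le_of_not_gt (fun h => hm (YoungDiagram.mem_iff_lt_colLen.mpr h))
    unfold xh yh at hx; omega

lemma yh_mono (μ : YoungDiagram) (b : ℕ) : yh μ b + 1 ≤ yh μ (b + 1) := by
  have := μ.colLen_anti b (b+1) (by omega)
  have := colLen_le_colLen_zero μ b
  have := colLen_le_colLen_zero μ (b+1)
  unfold yh; omega

/-- L1: every "gap" `t` below `xh a` yields a box in row `a` with hook `xh a - t`. -/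
lemma exists_box {μ : YoungDiagram} {a t : ℕ} (ha : a < μ.colLen 0)
    (ht : t < xh μ a) (htB : t ∉ betaSet μ) :
    ∃ b, (a, b) ∈ μ ∧ hookLen μ a b + t = xh μ a := by
  classical
  set r := μ.colLen 0 with hr
  set R := μ.rowLen a with hR
  have hRpos : 0 < R := rowLen_pos_iff.mpr ha
  have hy0 : yh μ 0 = 0 := by unfold yh; omega
  have hyR : t < yh μ R := by
    have h2 : μ.colLen R ≤ a := by
      by_contra h
      exact absurd (YoungDiagram.mem_iff_lt_rowLen.mp
        (YoungDiagram.mem_iff_lt_colLen.mpr (lt_of_not_ge h))) (by omega)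
    have h3 := colLen_le_colLen_zero μ R
    have : xh μ a < yh μ R := by unfold xh yh; omega
    omega
  set b := Nat.findGreatest (fun b => yh μ b ≤ t) R with hb
  have hPb : yh μ b ≤ t :=
    Nat.findGreatest_spec (P := fun b => yh μ b ≤ t) (Nat.zero_le R) (by omega)
  have hle : b ≤ R := Nat.findGreatest_le (P := fun b => yh μ b ≤ t) R
  have hbR : b < R := by
    rcases Nat.eq_or_lt_of_le hle with h | h
    · exfalso; rw [h] at hPb; omega
    · exact h
  have hPb1 : ¬ yh μ (b+1) ≤ t :=
    Nat.findGreatest_is_greatest (P := fun b => yh μ b ≤ t) (n := R) (by omega) (by omega)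
  rcases Nat.eq_or_lt_of_le hPb with heq | hlt
  · refine ⟨b, YoungDiagram.mem_iff_lt_rowLen.mpr hbR, ?_⟩
    have := hook_eq (YoungDiagram.mem_iff_lt_rowLen.mpr hbR)
    omega
  · exfalso
    -- t is strictly between yh b and yh (b+1): then t ∈ betaSet, contradiction
    have hble : t ≤ b + r := by
      have h3 := colLen_le_colLen_zero μ (b+1)
      have : yh μ (b+1) ≤ b + 1 + r := by unfold yh; omega
      omega
    set j := b + r - t with hj
    have h1 : j < μ.colLen b := by
      have := colLen_le_colLen_zero μ b
      unfold yh at hlt; omega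
    have h2 : μ.colLen (b+1) ≤ j := by
      have := colLen_le_colLen_zero μ (b+1)
      unfold yh at hPb1; omega
    have h4 : b < μ.rowLen j := YoungDiagram.mem_iff_lt_rowLen.mp
      (YoungDiagram.mem_iff_lt_colLen.mpr h1)
    have h5 : μ.rowLen j ≤ b + 1 := by
      by_contra h
      exact absurd (YoungDiagram.mem_iff_lt_colLen.mp
        (YoungDiagram.mem_iff_lt_rowLen.mpr (by omega : b + 1 < μ.rowLen j))) (by omega)
    have hjr : j < r := lt_of_lt_of_le h1 (colLen_le_colLen_zero μ b)
    apply htB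
    refine Finset.mem_image.mpr ⟨j, Finset.mem_range.mpr hjr, ?_⟩
    unfold xh; omega

/-- Closure property of a beta set. -/
def Closed (L : ℕ) (B : Finset ℕ) : Prop := ∀ h ∈ B, L ≤ h → h - L ∈ B

theorem isCore_iff (L : ℕ) (μ : YoungDiagram) :
    IsCore L μ ↔ Closed L (betaSet μ) := by
  constructor
  · intro hc h hh hLh
    rcases Nat.eq_zero_or_pos L with h0 | hL
    · simpa [h0] using hh
    obtain ⟨a, ha, hx⟩ := Finset.mem_image.mp hh
    rw [Finset.mem_range] at ha
    by_contra hnot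
    obtain ⟨b, hmem, hhook⟩ := exists_box ha (by omega : h - L < xh μ a) (hx ▸ hnot)
    exact hc a b hmem ⟨1, by omega⟩
  · intro hcl a b hab hdvd
    have ha : a < μ.colLen 0 :=
      lt_of_lt_of_le (YoungDiagram.mem_iff_lt_colLen.mp hab) (colLen_le_colLen_zero μ b)
    obtain ⟨heq, hlt⟩ := hook_eq hab
    obtain ⟨c, hc⟩ := hdvd
    rcases Nat.eq_zero_or_pos L with h0 | hL
    · subst h0; simp at hc; omega
    have hcpos : 0 < c := by
      rcases Nat.eq_zero_or_pos c with h | h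
      · exfalso; subst h; simp at hc; omega
      · exact h
    have key : ∀ i ≤ c, yh μ b + (c - i) * L ∈ betaSet μ := by
      intro i
      induction i with
      | zero =>
        intro _
        have hcm : c * L = L * c := Nat.mul_comm c L
        have : yh μ b + (c - 0) * L = xh μ a := by
          rw [Nat.sub_zero]; omega
        rw [this]
        exact Finset.mem_image.mpr ⟨a, Finset.mem_range.mpr ha, rfl⟩
      | succ i ih =>
        intro hic
        have hmem := ih (by omega)
        have hL' : L ≤ yh μ b + (c - i) * L := by
          have : 1 ≤ c - i := by omega
          calc L ≤ (c-i) * L := Nat.le_mul_of_pos_left L (by omega)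
          _ ≤ yh μ b + (c - i) * L := by omega
        have := hcl _ hmem hL'
        have heq2 : yh μ b + (c - i) * L - L = yh μ b + (c - (i+1)) * L := by
          have h9 : c - i = (c - (i+1)) + 1 := by omega
          rw [h9, Nat.add_mul, Nat.one_mul]; omega
        rwa [heq2] at this
    have := key c (le_refl c)
    simp only [Nat.sub_self, Nat.zero_mul, Nat.add_zero] at this
    exact absurd this (yh_not_mem b)

end CoreProof

namespace CoreProof
open YoungDiagram Finset

lemma yd_ext {μ ν : YoungDiagram} (h : ∀ c : ℕ × ℕ, c ∈ μ ↔ c ∈ ν) : μ = ν := by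
  cases μ; cases ν
  simp only [YoungDiagram.mk.injEq]
  ext c
  exact h c

lemma mem_betaSet {μ : YoungDiagram} {h : ℕ} :
    h ∈ betaSet μ ↔ ∃ a, a < μ.colLen 0 ∧ xh μ a = h := by
  simp [betaSet, Finset.mem_image, Finset.mem_range]

/-- the canonical sorted form of the beta set. -/
lemma betaSet_sort (μ : YoungDiagram) :
    List.ofFn (fun j : Fin (μ.colLen 0) => xh μ (μ.colLen 0 - 1 - j)) =
      (betaSet μ).sort (· ≤ ·) := by
  set r := μ.colLen 0 with hr
  set f : Fin r → ℕ := fun j => xh μ (r - 1 - j) with hf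
  have hmono : ∀ i j : Fin r, i < j → f i < f j := by
    intro i j hij
    have hi : (i : ℕ) < r := i.2
    have hj : (j : ℕ) < r := j.2
    exact xh_lt_xh (by omega) (by omega)
  haveI : Std.Antisymm (fun x1 x2 : ℕ => x1 ≤ x2) := ⟨fun a b h1 h2 => le_antisymm h1 h2⟩
  refine (fun hp h1 h2 => List.Perm.eq_of_pairwise' (r := fun x1 x2 => x1 ≤ x2) h1 h2 hp) ?_ ?_ ?_
  · apply List.perm_of_nodup_nodup_toFinset_eq
    · exact List.nodup_ofFn.mpr (fun i j hij => by
        by_contra hne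
        rcases lt_or_gt_of_ne hne with h | h
        · exact absurd hij (Nat.ne_of_lt (hmono i j h))
        · exact absurd hij (Nat.ne_of_gt (hmono j i h)))
    · exact Finset.sort_nodup _ _
    · ext h
      simp only [List.mem_toFinset, List.mem_ofFn, Set.mem_range,
        Finset.sort_toFinset, mem_betaSet]
      constructor
      · rintro ⟨j, rfl⟩
        exact ⟨r - 1 - j, by have := j.2; omega, rfl⟩
      · rintro ⟨a, ha, rfl⟩
        refine ⟨⟨r - 1 - a, by omega⟩, ?_⟩
        show xh μ (r - 1 - (r - 1 - a)) = xh μ a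
        congr 1
        omega
  · rw [List.pairwise_ofFn]
    exact fun i j hij => le_of_lt (hmono i j hij)
  · exact Finset.pairwise_sort _ _

lemma xh_eq_get {μ : YoungDiagram} {a : ℕ} (ha : a < μ.colLen 0) :
    xh μ a = ((betaSet μ).sort (· ≤ ·)).getD (μ.colLen 0 - 1 - a) 0 := by
  have h := betaSet_sort μ
  set r := μ.colLen 0 with hr
  rw [← h]
  have hlen : (List.ofFn (fun j : Fin r => xh μ (r - 1 - j))).length = r := by
    simp
  rw [List.getD_eq_getElem _ _ (by omega), List.getElem_ofFn]
  show xh μ a = xh μ (r - 1 - (r - 1 - a))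
  congr 1
  omega

lemma rowLen_eq_zero_of_le {μ : YoungDiagram} {a : ℕ} (ha : μ.colLen 0 ≤ a) :
    μ.rowLen a = 0 := by
  by_contra h
  exact absurd (rowLen_pos_iff.mp (Nat.pos_of_ne_zero h)) (by omega)

lemma betaSet_injective : Function.Injective betaSet := by
  intro μ ν h
  have hcard : μ.colLen 0 = ν.colLen 0 := by
    rw [← card_betaSet μ, ← card_betaSet ν, h]
  have hrow : ∀ a, μ.rowLen a = ν.rowLen a := by
    intro a
    rcases Nat.lt_or_ge a (μ.colLen 0) with ha | ha
    · have h1 := xh_eq_get ha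
      have h2 := xh_eq_get (hcard ▸ ha)
      rw [← h, ← hcard] at h2
      have h3 : xh μ a = xh ν a := by rw [h1, h2]
      have p1 : 0 < μ.rowLen a := rowLen_pos_iff.mpr ha
      have p2 : 0 < ν.rowLen a := rowLen_pos_iff.mpr (hcard ▸ ha)
      unfold xh at h3; omega
    · rw [rowLen_eq_zero_of_le ha, rowLen_eq_zero_of_le (hcard ▸ ha)]
  apply yd_ext
  rintro ⟨a, b⟩
  rw [YoungDiagram.mem_iff_lt_rowLen, YoungDiagram.mem_iff_lt_rowLen, hrow]

lemma betaSet_surjective {B : Finset ℕ} (hB : 0 ∉ B) : ∃ μ, betaSet μ = B := by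
  classical
  set r := B.card with hr
  set s := B.sort (· ≤ ·) with hs
  have hlen : s.length = r := Finset.length_sort _
  have hslt : s.SortedLT := Finset.sortedLT_sort B
  have hmem : ∀ (i : ℕ) (hi : i < r), s.get ⟨i, by omega⟩ ∈ B := by
    intro i hi
    rw [← Finset.mem_sort (α := ℕ) (· ≤ ·)]
    exact List.get_mem _ _
  have hgc : ∀ (i j : ℕ) (hi : i < s.length) (hj : j < s.length), i = j →
      s.get ⟨i, hi⟩ = s.get ⟨j, hj⟩ := by
    intro i j hi hj h
    subst h; rfl
  have hmono : ∀ (i j : ℕ) (hi : i < r) (hj : j < r), i < j →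
      s.get ⟨i, by omega⟩ < s.get ⟨j, by omega⟩ := by
    intro i j hi hj hij
    exact hslt.strictMono_get (by simpa using hij)
  have hval : ∀ (j : ℕ) (hj : j < r), j + 1 ≤ s.get ⟨j, by omega⟩ := by
    intro j
    induction j with
    | zero => intro h0
              have := hmem 0 h0
              rcases Nat.eq_zero_or_pos (s.get ⟨0, by omega⟩) with hz | hz
              · exact absurd (hz ▸ this) hB
              · omega
    | succ j ih => intro hj
                   have h1 := ih (by omega)
                   have h2 := hmono j (j+1) (by omega) hj (by omega)
                   omega
  set f : Fin r → ℕ := fun a => s.get ⟨r - 1 - a, by have := a.2; omega⟩ - (r - 1 - a) with hf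
  have hstep : ∀ (j j' : ℕ) (hj : j < r) (hj' : j' < r), j' ≤ j →
      s.get ⟨j', by omega⟩ + (j - j') ≤ s.get ⟨j, by omega⟩ := by
    intro j j' hj hj' hle
    rcases Nat.eq_or_lt_of_le hle with h | h
    · subst h; omega
    · have := hmono j' j hj' hj h
      -- need stronger: difference at least j - j'
      clear this
      have key : ∀ (c : ℕ) (hc : j' + c < r),
          s.get ⟨j', by omega⟩ + c ≤ s.get ⟨j' + c, by omega⟩ := by
        intro c
        induction c with
        | zero => intro h0
                  have h3 := hgc (j' + 0) j' (by omega) (by omega) (by omega)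
                  omega
        | succ c ih => intro hc
                       have h1 := ih (by omega)
                       have h2 := hmono (j' + c) (j' + c + 1) (by omega) (by omega) (by omega)
                       have h3 := hgc (j' + c + 1) (j' + (c + 1)) (by omega) (by omega) (by omega)
                       omega
      have := key (j - j') (by omega)
      have h4 := hgc (j' + (j - j')) j (by omega) (by omega) (by omega)
      omega
  have hwsorted : (List.ofFn f).Pairwise (· ≥ ·) := by
    rw [List.pairwise_ofFn]
    intro i j hij
    simp only [hf]
    have hi := i.2
    have hj := j.2
    have := hstep (r - 1 - (i:ℕ)) (r - 1 - (j:ℕ)) (by omega) (by omega) (by omega)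
    have hv := hval (r - 1 - (j:ℕ)) (by omega)
    omega
  set μ0 := YoungDiagram.ofRowLens (List.ofFn f) hwsorted.sortedGE with hμ0
  have hwlen : (List.ofFn f).length = r := by simp
  have hrlen : ∀ (a : ℕ) (ha : a < r),
      μ0.rowLen a = s.get ⟨r - 1 - a, by omega⟩ - (r - 1 - a) := by
    intro a ha
    have h1 := YoungDiagram.rowLen_ofRowLens (w := List.ofFn f) (hw := hwsorted.sortedGE)
      ⟨a, by omega⟩
    simp only [Fin.getElem_fin, List.getElem_ofFn] at h1
    exact h1
  have hrpos : ∀ (a : ℕ) (ha : a < r), 0 < μ0.rowLen a := by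
    intro a ha
    rw [hrlen a ha]
    have := hval (r - 1 - a) (by omega)
    omega
  have hr0 : ∀ (a : ℕ), r ≤ a → μ0.rowLen a = 0 := by
    intro a ha
    by_contra hne
    have : (a, 0) ∈ μ0 := YoungDiagram.mem_iff_lt_rowLen.mpr (Nat.pos_of_ne_zero hne)
    rw [hμ0, YoungDiagram.mem_ofRowLens] at this
    obtain ⟨hlt, _⟩ := this
    rw [hwlen] at hlt
    omega
  have hcol : μ0.colLen 0 = r := by
    rcases Nat.lt_trichotomy (μ0.colLen 0) r with h | h | h
    · exfalso
      have := hrpos (μ0.colLen 0) h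
      have := rowLen_pos_iff.mp this
      omega
    · exact h
    · exfalso
      have : (r, 0) ∈ μ0 := YoungDiagram.mem_iff_lt_colLen.mpr h
      have := YoungDiagram.mem_iff_lt_rowLen.mp this
      have := hr0 r (le_refl r)
      omega
  refine ⟨μ0, ?_⟩
  ext h
  rw [mem_betaSet, hcol]
  constructor
  · rintro ⟨a, ha, rfl⟩
    have hx : xh μ0 a = s.get ⟨r - 1 - a, by omega⟩ := by
      have h1 := hrlen a ha
      have h2 := hval (r - 1 - a) (by omega)
      unfold xh
      omega
    rw [hx]
    exact hmem _ (by omega)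
  · intro hh
    have : h ∈ s := (Finset.mem_sort (α := ℕ) (· ≤ ·)).mpr hh
    obtain ⟨⟨j, hj⟩, hget⟩ := List.mem_iff_get.mp this
    rw [hlen] at hj
    refine ⟨r - 1 - j, by omega, ?_⟩
    have hx : xh μ0 (r - 1 - j) = s.get ⟨r - 1 - (r - 1 - j), by omega⟩ := by
      have h1 := hrlen (r - 1 - j) (by omega)
      have h2 := hval (r - 1 - (r - 1 - j)) (by omega)
      unfold xh
      omega
    rw [hx]
    exact (hgc (r - 1 - (r - 1 - j)) j (by omega) (by omega) (by omega)).trans hget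

end CoreProof

namespace CoreProof
open Finset

/-- number of beta-numbers on runner `i+1` (mod `L`). -/
def runnerCount (L : ℕ) (B : Finset ℕ) (i : ℕ) : ℕ :=
  (B.filter (fun h => h % L = i + 1)).card

lemma dc_mem_iff {S : Finset ℕ} (hdc : ∀ x ∈ S, ∀ y ≤ x, y ∈ S) {z : ℕ} :
    z ∈ S ↔ z < S.card := by
  constructor
  · intro hz
    have hsub : Finset.range (z + 1) ⊆ S := by
      intro y hy
      exact hdc z hz y (by simpa using Nat.lt_succ_iff.mp (Finset.mem_range.mp hy))
    have := Finset.card_le_card hsub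
    simpa using this
  · intro hz
    by_contra hnz
    have hsub : S ⊆ Finset.range z := by
      intro x hx
      rw [Finset.mem_range]
      by_contra hxz
      exact hnz (hdc x hx z (by omega))
    have := Finset.card_le_card hsub
    simp only [Finset.card_range] at this
    omega

section ClosedSets

variable {L : ℕ} {B : Finset ℕ}

lemma mod_ne_zero (hL : 0 < L) (hB0 : 0 ∉ B) (hcl : Closed L B) :
    ∀ h ∈ B, h % L ≠ 0 := by
  intro h
  induction h using Nat.strong_induction_on with
  | _ h ih =>
    intro hmem hmod
    have hpos : 0 < h := Nat.pos_of_ne_zero (fun h0 => hB0 (h0 ▸ hmem))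
    have hLh : L ≤ h := by
      rcases Nat.lt_or_ge h L with hc | hc
      · rw [Nat.mod_eq_of_lt hc] at hmod; omega
      · exact hc
    have hmem' : h - L ∈ B := hcl h hmem hLh
    have hmod' : (h - L) % L = 0 := by
      rw [← Nat.dvd_iff_mod_eq_zero] at hmod ⊢
      exact Nat.dvd_sub hmod dvd_rfl
    exact ih (h - L) (by omega) hmem' hmod'

end ClosedSets

end CoreProof

namespace CoreProof
open Finset

lemma runner_mem_iff {L : ℕ} {B : Finset ℕ} (hL : 0 < L) (hB0 : 0 ∉ B) (hcl : Closed L B)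
    {i z : ℕ} (hi : i + 1 < L) :
    i + 1 + L * z ∈ B ↔ z < runnerCount L B i := by
  classical
  set S := (B.filter (fun h => h % L = i + 1)).image (fun h => h / L) with hS
  have hmod : ∀ z : ℕ, (i + 1 + L * z) % L = i + 1 := by
    intro z
    rw [Nat.add_mul_mod_self_left]
    exact Nat.mod_eq_of_lt hi
  have hdiv : ∀ z : ℕ, (i + 1 + L * z) / L = z := by
    intro z
    rw [Nat.add_mul_div_left _ _ hL, Nat.div_eq_of_lt hi]
    omega
  have hmemS : ∀ w : ℕ, w ∈ S ↔ i + 1 + L * w ∈ B := by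
    intro w
    constructor
    · intro hw
      obtain ⟨h, hh, hhw⟩ := Finset.mem_image.mp hw
      obtain ⟨hhB, hhm⟩ := Finset.mem_filter.mp hh
      have hd := Nat.div_add_mod h L
      rw [hhw] at hd
      have : h = i + 1 + L * w := by omega
      rwa [this] at hhB
    · intro hw
      exact Finset.mem_image.mpr ⟨i + 1 + L * w,
        Finset.mem_filter.mpr ⟨hw, hmod w⟩, hdiv w⟩
  have hdesc : ∀ c w : ℕ, i + 1 + L * (w + c) ∈ B → i + 1 + L * w ∈ B := by
    intro c
    induction c with
    | zero => intro w h; simpa using h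
    | succ c ih =>
      intro w h
      have h1 : i + 1 + L * (w + (c+1)) = (i + 1 + L * (w + c)) + L := by ring
      rw [h1] at h
      have h2 := hcl _ h (by omega)
      rw [Nat.add_sub_cancel] at h2
      exact ih w h2
  have hdc : ∀ x ∈ S, ∀ y ≤ x, y ∈ S := by
    intro x hx y hy
    rw [hmemS] at hx ⊢
    have hxy : y + (x - y) = x := by omega
    apply hdesc (x - y)
    rwa [hxy]
  have hcard : S.card = runnerCount L B i := by
    rw [hS, runnerCount]
    apply Finset.card_image_of_injOn
    intro a ha b hb hab
    obtain ⟨_, ham⟩ := Finset.mem_filter.mp ha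
    obtain ⟨_, hbm⟩ := Finset.mem_filter.mp hb
    have hab' : a / L = b / L := hab
    have hda := Nat.div_add_mod a L
    have hdb := Nat.div_add_mod b L
    rw [hab'] at hda
    omega
  rw [← hcard, ← hmemS z]
  exact dc_mem_iff hdc

lemma card_eq_sum_runner {d : ℕ} {B : Finset ℕ} (hB0 : 0 ∉ B) (hcl : Closed (d+1) B) :
    B.card = ∑ i : Fin d, runnerCount (d+1) B (i : ℕ) := by
  classical
  rcases Nat.eq_zero_or_pos d with hd | hd
  · subst hd
    have hBe : B = ∅ := by
      rcases Finset.eq_empty_or_nonempty B with h | ⟨x, hx⟩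
      · exact h
      · exact absurd (Nat.mod_one x) (mod_ne_zero (by omega) hB0 hcl x hx)
    simp [hBe]
  · have key := Finset.card_eq_sum_card_fiberwise
      (f := fun h : ℕ => (⟨h % (d+1) - 1, by
        have := Nat.mod_lt h (show 0 < d+1 by omega); omega⟩ : Fin d))
      (s := B) (t := Finset.univ) (fun x _ => Finset.mem_univ _)
    rw [key]
    apply Finset.sum_congr rfl
    intro i _
    unfold runnerCount
    congr 1
    ext h
    simp only [Finset.mem_filter, Fin.mk.injEq]
    constructor
    · rintro ⟨hh, hfi⟩
      refine ⟨hh, ?_⟩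
      have hne := mod_ne_zero (show 0 < d+1 by omega) hB0 hcl h hh
      have hval : h % (d+1) - 1 = (i : ℕ) := congrArg Fin.val hfi
      omega
    · rintro ⟨hh, hmod⟩
      refine ⟨hh, ?_⟩
      apply Fin.ext
      simp only [Fin.val_mk]
      omega

lemma closed_ext {d : ℕ} {B B' : Finset ℕ} (hB0 : 0 ∉ B) (hcl : Closed (d+1) B)
    (hB0' : 0 ∉ B') (hcl' : Closed (d+1) B')
    (h : ∀ i : Fin d, runnerCount (d+1) B (i : ℕ) = runnerCount (d+1) B' (i : ℕ)) :
    B = B' := by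
  ext x
  by_cases hx : x % (d+1) = 0
  · constructor <;> intro hm
    · exact absurd hx (mod_ne_zero (by omega) hB0 hcl x hm)
    · exact absurd hx (mod_ne_zero (by omega) hB0' hcl' x hm)
  · have hmod := Nat.mod_lt x (show 0 < d+1 by omega)
    set i := x % (d+1) - 1 with hi
    have hid : i < d := by omega
    have hi1 : i + 1 < d + 1 := by omega
    have hxeq : x = i + 1 + (d+1) * (x / (d+1)) := by
      have := Nat.div_add_mod x (d+1); omega
    have h2 : runnerCount (d+1) B i = runnerCount (d+1) B' i := h ⟨i, hid⟩
    rw [hxeq, runner_mem_iff (by omega) hB0 hcl hi1,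
      runner_mem_iff (by omega) hB0' hcl' hi1, h2]

def beads (d : ℕ) (n : Fin d → ℕ) : Finset ℕ :=
  Finset.univ.biUnion
    (fun i : Fin d => (Finset.range (n i)).image (fun z => (i : ℕ) + 1 + (d+1) * z))

lemma mem_beads {d : ℕ} {n : Fin d → ℕ} {h : ℕ} :
    h ∈ beads d n ↔ ∃ i : Fin d, ∃ z, z < n i ∧ h = (i : ℕ) + 1 + (d+1) * z := by
  unfold beads
  rw [Finset.mem_biUnion]
  constructor
  · rintro ⟨i, _, hmem⟩
    obtain ⟨z, hz, hzh⟩ := Finset.mem_image.mp hmem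
    exact ⟨i, z, Finset.mem_range.mp hz, hzh.symm⟩
  · rintro ⟨i, z, hz, rfl⟩
    exact ⟨i, Finset.mem_univ _, Finset.mem_image.mpr ⟨z, Finset.mem_range.mpr hz, rfl⟩⟩

lemma zero_not_mem_beads {d : ℕ} {n : Fin d → ℕ} : 0 ∉ beads d n := by
  intro h
  obtain ⟨i, z, _, hz⟩ := mem_beads.mp h
  omega

lemma closed_beads {d : ℕ} {n : Fin d → ℕ} : Closed (d+1) (beads d n) := by
  intro h hm hL
  obtain ⟨i, z, hz, rfl⟩ := mem_beads.mp hm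
  have hid : (i : ℕ) < d := i.2
  rcases Nat.eq_zero_or_pos z with hz0 | hz0
  · exfalso; subst hz0; simp at hL; omega
  · apply mem_beads.mpr
    refine ⟨i, z - 1, by omega, ?_⟩
    have : (d+1) * z = (d+1) * (z-1) + (d+1) := by
      conv_lhs => rw [show z = (z-1)+1 by omega]
      rw [Nat.mul_succ]
    omega

lemma runnerCount_beads {d : ℕ} (n : Fin d → ℕ) (i : Fin d) :
    runnerCount (d+1) (beads d n) (i : ℕ) = n i := by
  classical
  unfold runnerCount
  have hfe : (beads d n).filter (fun h => h % (d+1) = (i:ℕ) + 1) =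
      (Finset.range (n i)).image (fun z => (i : ℕ) + 1 + (d+1) * z) := by
    ext h
    simp only [Finset.mem_filter, Finset.mem_image, Finset.mem_range]
    constructor
    · rintro ⟨hm, hmod⟩
      obtain ⟨i', z, hz, rfl⟩ := mem_beads.mp hm
      have hmod' : ((i' : ℕ) + 1 + (d+1) * z) % (d+1) = (i' : ℕ) + 1 := by
        rw [Nat.add_mul_mod_self_left]
        exact Nat.mod_eq_of_lt (by have := i'.2; omega)
      have hii : i' = i := Fin.ext (by omega)
      subst hii
      exact ⟨z, hz, rfl⟩
    · rintro ⟨z, hz, rfl⟩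
      refine ⟨mem_beads.mpr ⟨i, z, hz, rfl⟩, ?_⟩
      rw [Nat.add_mul_mod_self_left]
      exact Nat.mod_eq_of_lt (by have := i.2; omega)
  rw [hfe, Finset.card_image_of_injOn, Finset.card_range]
  intro a _ b _ hab
  have hab' : (i : ℕ) + 1 + (d+1) * a = (i : ℕ) + 1 + (d+1) * b := hab
  have : (d+1) * a = (d+1) * b := by omega
  exact Nat.eq_of_mul_eq_mul_left (by omega) this

end CoreProof

namespace CoreProof
open Finset

def Msup {d : ℕ} (n : Fin d → ℕ) : ℕ :=
  Finset.univ.sup (fun i : Fin d => (i : ℕ) + 1 + (d+1) * n i)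

lemma Msup_def {d : ℕ} (n : Fin d → ℕ) :
    Msup n = Finset.univ.sup (fun i : Fin d => (i : ℕ) + 1 + (d+1) * n i) := rfl

def toVec (d : ℕ) (μ : YoungDiagram) : Fin d → ℕ :=
  fun i => runnerCount (d+1) (betaSet μ) (i : ℕ)

lemma betaSet_closed {d : ℕ} {μ : YoungDiagram} (hc : IsCore (d+1) μ) :
    Closed (d+1) (betaSet μ) := (isCore_iff _ _).mp hc

theorem toVec_bijective (d : ℕ) :
    Function.Bijective (fun μ : {μ : YoungDiagram // IsCore (d+1) μ} => toVec d μ.1) := by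
  constructor
  · rintro ⟨μ, hμ⟩ ⟨ν, hν⟩ h
    have hB := closed_ext (zero_not_mem_betaSet μ) (betaSet_closed hμ)
      (zero_not_mem_betaSet ν) (betaSet_closed hν) (fun i => congrFun h i)
    exact Subtype.ext (betaSet_injective hB)
  · intro n
    obtain ⟨μ, hμB⟩ := betaSet_surjective (zero_not_mem_beads (n := n))
    have hcore : IsCore (d+1) μ := (isCore_iff _ _).mpr (by rw [hμB]; exact closed_beads)
    refine ⟨⟨μ, hcore⟩, ?_⟩
    funext i
    show runnerCount (d+1) (betaSet μ) (i : ℕ) = n i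
    rw [hμB]
    exact runnerCount_beads n i

lemma sup_base (d : ℕ) : Finset.univ.sup (fun i : Fin d => (i : ℕ) + 1) = d := by
  rcases Nat.eq_zero_or_pos d with hd | hd
  · subst hd; simp
  · apply le_antisymm
    · apply Finset.sup_le
      intro i _
      have := i.2; omega
    · have h1 := Finset.le_sup (f := fun i : Fin d => (i : ℕ) + 1)
        (Finset.mem_univ (⟨d - 1, by omega⟩ : Fin d))
      have h1' : ((⟨d - 1, by omega⟩ : Fin d) : ℕ) + 1 ≤
          Finset.univ.sup (fun i : Fin d => (i : ℕ) + 1) := h1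
      have h2 : ((⟨d - 1, by omega⟩ : Fin d) : ℕ) + 1 = d := by
        simp only [Fin.val_mk]; omega
      omega

theorem msup_toVec {d : ℕ} {μ : YoungDiagram} (hc : IsCore (d+1) μ) :
    Msup (toVec d μ) = μ.rowLen 0 + (∑ i, toVec d μ i) + d := by
  classical
  have hB0 := zero_not_mem_betaSet μ
  have hcl := betaSet_closed hc
  have hsum : ∑ i, toVec d μ i = (betaSet μ).card :=
    (card_eq_sum_runner hB0 hcl).symm
  have hcard := card_betaSet μ
  rcases Nat.eq_zero_or_pos (μ.colLen 0) with hr | hr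
  · have hBe : betaSet μ = ∅ := Finset.card_eq_zero.mp (by omega)
    have hrow : μ.rowLen 0 = 0 := rowLen_eq_zero_of_le (by omega)
    have hn : ∀ i : Fin d, toVec d μ i = 0 := by
      intro i
      unfold toVec runnerCount
      rw [hBe]
      simp
    have hM : Msup (toVec d μ) = d := by
      rw [Msup_def]
      rw [show (fun i : Fin d => (i : ℕ) + 1 + (d+1) * toVec d μ i) =
        (fun i : Fin d => (i : ℕ) + 1) from funext (fun i => by rw [hn i]; omega)]
      exact sup_base d
    rw [hM, hrow, hsum]
    omega
  · set M := xh μ 0 with hM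
    have hMB : M ∈ betaSet μ := mem_betaSet.mpr ⟨0, hr, rfl⟩
    have hMmax : ∀ b ∈ betaSet μ, b ≤ M := by
      intro b hb
      obtain ⟨a, ha, rfl⟩ := mem_betaSet.mp hb
      exact xh_le_xh_zero ha
    have hrow : μ.rowLen 0 + μ.colLen 0 = M + 1 := by
      have h1 : M = μ.rowLen 0 + (μ.colLen 0 - 0 - 1) := hM
      omega
    have hle : Msup (toVec d μ) ≤ M + (d+1) := by
      rw [Msup_def]
      apply Finset.sup_le
      intro i _
      have hrc : runnerCount (d+1) (betaSet μ) (i : ℕ) = toVec d μ i := rfl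
      rcases Nat.eq_zero_or_pos (toVec d μ i) with h0 | h0
      · rw [h0, Nat.mul_zero]
        have := i.2
        have hM1 : 1 ≤ M := by
          have := xh_pos hr; omega
        omega
      · have htop : (i : ℕ) + 1 + (d+1) * (toVec d μ i - 1) ∈ betaSet μ := by
          rw [runner_mem_iff (by omega) hB0 hcl (by have := i.2; omega)]
          omega
        have hbound := hMmax _ htop
        have hmul : (d+1) * (toVec d μ i) = (d+1) * (toVec d μ i - 1) + (d+1) := by
          conv_lhs => rw [show toVec d μ i = (toVec d μ i - 1) + 1 by omega]
          rw [Nat.mul_succ]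
        omega
    have hge : M + (d+1) ≤ Msup (toVec d μ) := by
      have hne := mod_ne_zero (show 0 < d+1 by omega) hB0 hcl M hMB
      have hmlt := Nat.mod_lt M (show 0 < d+1 by omega)
      set i0 : ℕ := M % (d+1) - 1 with hi0def
      have hi0 : i0 < d := by omega
      have hMeq : M = i0 + 1 + (d+1) * (M / (d+1)) := by
        have := Nat.div_add_mod M (d+1); omega
      have hz : M / (d+1) < runnerCount (d+1) (betaSet μ) i0 := by
        rw [← runner_mem_iff (show 0 < d+1 by omega) hB0 hcl (by omega)]
        exact hMeq ▸ hMB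
      have hrc : runnerCount (d+1) (betaSet μ) i0 = toVec d μ ⟨i0, hi0⟩ := rfl
      have hstep1 : M + (d+1) = i0 + 1 + (d+1) * (M / (d+1) + 1) := by
        rw [Nat.mul_succ]; omega
      have hstep2 : (d+1) * (M / (d+1) + 1) ≤ (d+1) * (toVec d μ ⟨i0, hi0⟩) :=
        Nat.mul_le_mul_left (d+1) (by omega)
      have hstep3 : ((⟨i0, hi0⟩ : Fin d) : ℕ) + 1 + (d+1) * (toVec d μ ⟨i0, hi0⟩) ≤
          Msup (toVec d μ) := by
        rw [Msup_def]
        exact Finset.le_sup (f := fun i : Fin d => (i : ℕ) + 1 + (d+1) * toVec d μ i)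
          (Finset.mem_univ (⟨i0, hi0⟩ : Fin d))
      have hv : ((⟨i0, hi0⟩ : Fin d) : ℕ) = i0 := rfl
      omega
    omega

end CoreProof

namespace CoreProof
open Finset

section VectorBij

lemma succAbove_val {e : ℕ} (P : Fin (e+1)) (j : Fin e) :
    ((P.succAbove j : Fin (e+1)) : ℕ) =
      if (j : ℕ) < (P : ℕ) then (j : ℕ) else (j : ℕ) + 1 := by
  by_cases h : (j : ℕ) < (P : ℕ)
  · rw [if_pos h, Fin.succAbove_of_castSucc_lt P j (by simpa [Fin.lt_def] using h)]
    rfl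
  · rw [if_neg h, Fin.succAbove_of_le_castSucc P j (by simpa [Fin.le_def] using Nat.le_of_not_gt h)]
    rfl

/-- terms whose sup is `Msup` for `d = e+1`. -/
lemma tA_ne {e : ℕ} (n : Fin (e+1) → ℕ) {i j : Fin (e+1)} (h : i ≠ j) :
    (i : ℕ) + 1 + (e+2) * n i ≠ (j : ℕ) + 1 + (e+2) * n j := by
  intro heq
  have hmod : ∀ i : Fin (e+1), ((i : ℕ) + 1 + (e+2) * n i) % (e+2) = (i : ℕ) + 1 := by
    intro i
    rw [Nat.add_mul_mod_self_left]
    exact Nat.mod_eq_of_lt (by have := i.2; omega)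
  have h1 := hmod i
  have h2 := hmod j
  rw [heq] at h1
  exact h (Fin.ext (by omega))

/-- position of the inserted runner -/
def insP (e c : ℕ) : Fin (e+1) :=
  if c % (e+1) = 0 then ⟨e, by omega⟩
  else ⟨c % (e+1) - 1, by have := Nat.mod_lt c (show 0 < e+1 by omega); omega⟩

/-- value of the inserted runner -/
def insV (e c : ℕ) : ℕ := (c + e - (insP e c : ℕ)) / (e+1)

lemma insP_le (e c : ℕ) : (insP e c : ℕ) ≤ e := by
  have := (insP e c).2; omega

lemma insPV (e c : ℕ) : (insP e c : ℕ) + 1 + (e+1) * insV e c = c + (e+1) := by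
  have hdm := Nat.div_add_mod c (e+1)
  unfold insV
  by_cases h : c % (e+1) = 0
  · have hP : (insP e c : ℕ) = e := by unfold insP; rw [if_pos h]
    rw [hP]
    have h1 : c + e - e = c := by omega
    rw [h1]
    omega
  · have hmlt := Nat.mod_lt c (show 0 < e+1 by omega)
    have hP : (insP e c : ℕ) = c % (e+1) - 1 := by unfold insP; rw [if_neg h]
    rw [hP]
    have h1 : c + e - (c % (e+1) - 1) = (e+1) * (c / (e+1) + 1) := by
      rw [Nat.mul_succ]; omega
    rw [h1, Nat.mul_div_cancel_left _ (show 0 < e+1 by omega)]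
    rw [Nat.mul_succ]
    omega

/-- uniqueness of the inserted dividend -/
lemma insPV_unique (e c : ℕ) {P : ℕ} {V : ℕ} (hP : P ≤ e)
    (hid : P + 1 + (e+1) * V = c + (e+1)) :
    (insP e c : ℕ) = P ∧ insV e c = V := by
  have h1 := insPV e c
  -- both (insP, insV) and (P, V) satisfy the same congruence; uniqueness by mod arithmetic
  have h2 : ((insP e c : ℕ) + 1) % (e+1) = (P + 1) % (e+1) := by
    have hm1 : ((insP e c : ℕ) + 1 + (e+1) * insV e c) % (e+1) = ((insP e c : ℕ) + 1) % (e+1) :=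
      Nat.add_mul_mod_self_left _ _ _
    have hm2 : (P + 1 + (e+1) * V) % (e+1) = (P + 1) % (e+1) :=
      Nat.add_mul_mod_self_left _ _ _
    rw [h1] at hm1
    rw [hid] at hm2
    omega
  have hle := insP_le e c
  have h3 : (insP e c : ℕ) = P := by
    have hx1 : (insP e c : ℕ) + 1 ≤ e + 1 := by omega
    have hx2 : P + 1 ≤ e + 1 := by omega
    rcases Nat.eq_or_lt_of_le hx1 with hy1 | hy1 <;>
      rcases Nat.eq_or_lt_of_le hx2 with hy2 | hy2
    · omega
    · exfalso
      rw [hy1, Nat.mod_self, Nat.mod_eq_of_lt hy2] at h2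
      omega
    · exfalso
      rw [hy2, Nat.mod_self, Nat.mod_eq_of_lt hy1] at h2
      omega
    · rw [Nat.mod_eq_of_lt hy1, Nat.mod_eq_of_lt hy2] at h2
      omega
  refine ⟨h3, ?_⟩
  rw [h3] at h1
  have : (e+1) * insV e c = (e+1) * V := by omega
  exact Nat.eq_of_mul_eq_mul_left (by omega) this

end VectorBij
end CoreProof

namespace CoreProof
open Finset

section VectorBij2

/-- non-dependent insertNth -/
def insFun {e : ℕ} (P : Fin (e+1)) (v : ℕ) (m : Fin e → ℕ) : Fin (e+1) → ℕ :=
  P.insertNth v m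

lemma insFun_same {e : ℕ} (P : Fin (e+1)) (v : ℕ) (m : Fin e → ℕ) :
    insFun P v m P = v := Fin.insertNth_apply_same (α := fun _ => ℕ) P v m

lemma insFun_succAbove {e : ℕ} (P : Fin (e+1)) (v : ℕ) (m : Fin e → ℕ) (j : Fin e) :
    insFun P v m (P.succAbove j) = m j := Fin.insertNth_apply_succAbove (α := fun _ => ℕ) P v m j

lemma removeNth_insFun {e : ℕ} (P : Fin (e+1)) (v : ℕ) (m : Fin e → ℕ) :
    P.removeNth (insFun P v m) = m := Fin.removeNth_insertNth (α := fun _ => ℕ) P v m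

lemma insFun_removeNth {e : ℕ} (P : Fin (e+1)) (n : Fin (e+1) → ℕ) :
    insFun P (n P) (P.removeNth n) = n := Fin.insertNth_self_removeNth (α := fun _ => ℕ) P n

/-- pointwise bound from the `Msup` bound -/
lemma term_le_msup {d : ℕ} (m : Fin d → ℕ) (j : Fin d) :
    (j : ℕ) + 1 + (d+1) * m j ≤ Msup m :=
  Finset.le_sup (f := fun i : Fin d => (i : ℕ) + 1 + (d+1) * m i) (Finset.mem_univ j)

/-- arithmetic core of the insertion: inserted term strictly dominates. -/
lemma ins_strict_aux (e k : ℕ) (m : Fin e → ℕ) (P : Fin (e+1)) (v : ℕ)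
    (hid : (P : ℕ) + 1 + (e+1) * v = (k + ∑ j, m j) + (e+1))
    (hm : Msup m ≤ k + (∑ j, m j) + e) (j : Fin e) :
    ((P.succAbove j : Fin (e+1)) : ℕ) + 1 + (e+2) * m j < (P : ℕ) + 1 + (e+2) * v := by
  have hterm : (j : ℕ) + 1 + (e+1) * m j ≤ k + (∑ j, m j) + e :=
    le_trans (term_le_msup m j) hm
  have hP := P.2
  have hj := j.2
  have hsav := succAbove_val P j
  have g1 : (e+2) * m j = (e+1) * m j + m j := by rw [Nat.succ_mul]
  have g2 : (e+2) * v = (e+1) * v + v := by rw [Nat.succ_mul]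
  by_cases hlt : (j : ℕ) < (P : ℕ)
  · rw [if_pos hlt] at hsav
    have hmv : m j ≤ v := by
      by_contra hcon
      have h1 : v + 1 ≤ m j := by omega
      have g3 : (e+1) * (v+1) ≤ (e+1) * m j := Nat.mul_le_mul_left _ h1
      have g4 : (e+1) * (v+1) = (e+1) * v + (e+1) := by rw [Nat.mul_succ]
      omega
    omega
  · rw [if_neg hlt] at hsav
    have hmv : m j < v := by
      by_contra hcon
      have h1 : v ≤ m j := by omega
      have g3 : (e+1) * v ≤ (e+1) * m j := Nat.mul_le_mul_left _ h1
      omega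
    omega

lemma ins_strict (e k : ℕ) (m : Fin e → ℕ) (P : Fin (e+1)) (v : ℕ)
    (hid : (P : ℕ) + 1 + (e+1) * v = (k + ∑ j, m j) + (e+1))
    (hm : Msup m ≤ k + (∑ j, m j) + e) :
    ∀ i : Fin (e+1), i ≠ P →
      (i : ℕ) + 1 + (e+2) * (insFun P v m) i < (P : ℕ) + 1 + (e+2) * v := by
  intro i hi
  obtain ⟨j, rfl⟩ := Fin.exists_succAbove_eq hi
  rw [insFun_succAbove]
  exact ins_strict_aux e k m P v hid hm j

lemma ins_msup (e k : ℕ) (m : Fin e → ℕ) (P : Fin (e+1)) (v : ℕ)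
    (hid : (P : ℕ) + 1 + (e+1) * v = (k + ∑ j, m j) + (e+1))
    (hm : Msup m ≤ k + (∑ j, m j) + e) :
    Msup (insFun P v m) = (P : ℕ) + 1 + (e+2) * v := by
  apply le_antisymm
  · rw [Msup_def]
    apply Finset.sup_le
    intro i _
    rcases eq_or_ne i P with rfl | hne
    · rw [insFun_same]
    · have h1 := ins_strict e k m P v hid hm i hne
      have hfix : ((e+1)+1) * insFun P v m i = (e+2) * insFun P v m i := rfl
      omega
  · have h1 := term_le_msup (insFun P v m) P
    rw [insFun_same] at h1
    have hfix : ((e+1)+1) * v = (e+2) * v := rfl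
    omega

lemma ins_sum {e : ℕ} (m : Fin e → ℕ) (P : Fin (e+1)) (v : ℕ) :
    (∑ i, insFun P v m i) = v + ∑ j, m j := by
  rw [Fin.sum_univ_succAbove (insFun P v m) P, insFun_same]
  congr 1
  apply Finset.sum_congr rfl
  intro j _
  rw [insFun_succAbove]

lemma ins_mem (e k : ℕ) (m : Fin e → ℕ)
    (hm : Msup m ≤ k + (∑ j, m j) + e) :
    Msup (insFun (insP e (k + ∑ j, m j)) (insV e (k + ∑ j, m j)) m) =
      k + (∑ i, insFun (insP e (k + ∑ j, m j)) (insV e (k + ∑ j, m j)) m i) + (e+1) := by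
  set c := k + ∑ j, m j with hc
  have hid := insPV e c
  rw [ins_msup e k m _ _ hid hm, ins_sum]
  have g2 : (e+2) * insV e c = (e+1) * insV e c + insV e c := by rw [Nat.succ_mul]
  omega

/-- any index attaining the sup under the strict-domination hypothesis is `P`. -/
lemma argmax_eq (e : ℕ) (n : Fin (e+1) → ℕ) (P : Fin (e+1))
    (hstrict : ∀ i : Fin (e+1), i ≠ P →
      (i : ℕ) + 1 + (e+2) * n i < (P : ℕ) + 1 + (e+2) * n P)
    (i : Fin (e+1))
    (hi : (i : ℕ) + 1 + (e+2) * n i = Msup n) : i = P := by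
  by_contra hne
  have h1 := hstrict i hne
  have h2 := term_le_msup n P
  have hfix : ((e+1)+1) * n P = (e+2) * n P := rfl
  omega

/-- an argmax exists. -/
lemma argmax_exists (e : ℕ) (n : Fin (e+1) → ℕ) :
    ∃ J : Fin (e+1), ((J : ℕ) + 1 + (e+2) * n J = Msup n ∧
      ∀ i : Fin (e+1), i ≠ J → (i : ℕ) + 1 + (e+2) * n i < (J : ℕ) + 1 + (e+2) * n J) := by
  obtain ⟨J, _, hJ⟩ := Finset.exists_mem_eq_sup Finset.univ Finset.univ_nonempty
    (fun i : Fin (e+1) => (i : ℕ) + 1 + ((e+1)+1) * n i)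
  have hJ' : Msup n = (J : ℕ) + 1 + (e+2) * n J := hJ
  refine ⟨J, hJ'.symm, ?_⟩
  intro i hne
  have h1 := term_le_msup n i
  have hfix : ((e+1)+1) * n i = (e+2) * n i := rfl
  have h2 := tA_ne n hne
  omega

/-- deletion: the remaining vector satisfies the ≤ bound. -/
lemma del_mem (e k : ℕ) (n : Fin (e+1) → ℕ) (J : Fin (e+1))
    (hmax : ∀ i : Fin (e+1), i ≠ J →
      (i : ℕ) + 1 + (e+2) * n i < (J : ℕ) + 1 + (e+2) * n J)
    (htJ : (J : ℕ) + 1 + (e+2) * n J = k + (∑ i, n i) + (e+1)) :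
    Msup (J.removeNth n) ≤ k + (∑ j, J.removeNth n j) + e := by
  have hsum : (∑ i, n i) = n J + ∑ j, J.removeNth n j := by
    rw [Fin.sum_univ_succAbove n J]
    rfl
  rw [Msup_def]
  apply Finset.sup_le
  intro j _
  have hjv : J.removeNth n j = n (J.succAbove j) := rfl
  have hsav := succAbove_val J j
  have hJ := J.2
  have hj := j.2
  have hne : J.succAbove j ≠ J := Fin.succAbove_ne J j
  have hlt := hmax _ hne
  set w := ((J.succAbove j : Fin (e+1)) : ℕ) with hw
  set A := n (J.succAbove j) with hA
  set N := n J with hN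
  have g1 : (e+2) * A = (e+1) * A + A := by rw [Nat.succ_mul]
  have g2 : (e+2) * N = (e+1) * N + N := by rw [Nat.succ_mul]
  have hAN : A ≤ N := by
    by_contra hcon
    have h1 : N + 1 ≤ A := by omega
    have g3 : (e+2) * (N+1) ≤ (e+2) * A := Nat.mul_le_mul_left _ h1
    have g4 : (e+2) * (N+1) = (e+2) * N + (e+2) := by rw [Nat.mul_succ]
    omega
  have hmul : (e+1) * A ≤ (e+1) * N := Nat.mul_le_mul_left _ hAN
  have hfix : ((e+1)) * J.removeNth n j = (e+1) * A := by rw [hjv]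
  by_cases hcase : (j : ℕ) < (J : ℕ)
  · rw [if_pos hcase] at hsav
    omega
  · rw [if_neg hcase] at hsav
    have hAN' : A < N := by
      by_contra hcon
      have h1 : N ≤ A := by omega
      have g3 : (e+2) * N ≤ (e+2) * A := Nat.mul_le_mul_left _ h1
      omega
    have hmul' : (e+1) * A + (e+1) ≤ (e+1) * N := by
      have h1 : A + 1 ≤ N := by omega
      have h2 := Nat.mul_le_mul_left (e+1) h1
      rw [Nat.mul_succ] at h2
      omega
    omega

/-- the recovered insertion data after deletion -/
lemma del_recover (e k : ℕ) (n : Fin (e+1) → ℕ) (J : Fin (e+1))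
    (htJ : (J : ℕ) + 1 + (e+2) * n J = k + (∑ i, n i) + (e+1)) :
    insP e (k + ∑ j, J.removeNth n j) = J ∧
      insV e (k + ∑ j, J.removeNth n j) = n J := by
  have hsum : (∑ i, n i) = n J + ∑ j, J.removeNth n j := by
    rw [Fin.sum_univ_succAbove n J]
    rfl
  set c := k + ∑ j, J.removeNth n j with hc
  set N := n J with hN
  have hJ := J.2
  have g2 : (e+2) * N = (e+1) * N + N := by rw [Nat.succ_mul]
  have hid : (J : ℕ) + 1 + (e+1) * N = c + (e+1) := by omega
  have h := insPV_unique e c (show (J : ℕ) ≤ e by omega) hid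
  exact ⟨Fin.ext h.1, h.2⟩

end VectorBij2
end CoreProof

namespace CoreProof
open Finset

def psi (e k : ℕ) (m : {m : Fin e → ℕ // Msup m ≤ k + (∑ j, m j) + e}) :
    {n : Fin (e+1) → ℕ // Msup n = k + (∑ i, n i) + (e+1)} :=
  ⟨insFun (insP e (k + ∑ j, m.1 j)) (insV e (k + ∑ j, m.1 j)) m.1, ins_mem e k m.1 m.2⟩

set_option maxHeartbeats 1000000 in
theorem psi_bijective (e k : ℕ) : Function.Bijective (psi e k) := by
  constructor
  · rintro ⟨m1, hm1⟩ ⟨m2, hm2⟩ h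
    have hfun : insFun (insP e (k + ∑ j, m1 j)) (insV e (k + ∑ j, m1 j)) m1 =
        insFun (insP e (k + ∑ j, m2 j)) (insV e (k + ∑ j, m2 j)) m2 :=
      congrArg Subtype.val h
    set c1 := k + ∑ j, m1 j with hc1
    set c2 := k + ∑ j, m2 j with hc2
    have hstrict1 : ∀ i : Fin (e+1), i ≠ insP e c1 →
        (i : ℕ) + 1 + (e+2) * (insFun (insP e c1) (insV e c1) m1) i <
          (insP e c1 : ℕ) + 1 + (e+2) * (insFun (insP e c1) (insV e c1) m1) (insP e c1) := by
      intro i hi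
      rw [insFun_same]
      exact ins_strict e k m1 _ _ (insPV e c1) hm1 i hi
    have hmsup2 := ins_msup e k m2 _ _ (insPV e c2) hm2
    have hP2 : insP e c2 = insP e c1 := by
      apply argmax_eq e _ (insP e c1) hstrict1
      rw [hfun, insFun_same, hmsup2]
    have h4 : (insP e c1).removeNth (insFun (insP e c2) (insV e c2) m2) = m1 := by
      rw [← hfun]; exact removeNth_insFun _ _ _
    have h5 : (insP e c2).removeNth (insFun (insP e c2) (insV e c2) m2) = m2 :=
      removeNth_insFun _ _ _
    have h6 := congrArg
      (fun P : Fin (e+1) => Fin.removeNth P (insFun (insP e c2) (insV e c2) m2)) hP2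
    exact Subtype.ext (h4.symm.trans ((h6.symm).trans h5))
  · rintro ⟨n, hn⟩
    obtain ⟨J, hJmax, hJstrict⟩ := argmax_exists e n
    have htJ : (J : ℕ) + 1 + (e+2) * n J = k + (∑ i, n i) + (e+1) := by
      rw [hJmax, hn]
    have hmB := del_mem e k n J hJstrict htJ
    obtain ⟨hP, hV⟩ := del_recover e k n J htJ
    refine ⟨⟨J.removeNth n, hmB⟩, ?_⟩
    apply Subtype.ext
    show insFun (insP e (k + ∑ j, J.removeNth n j)) (insV e (k + ∑ j, J.removeNth n j))
      (J.removeNth n) = n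
    rw [hP, hV]
    exact insFun_removeNth J n

end CoreProof

theorem stmt_1 (ℓ k : ℕ) (hℓ : 2 ≤ ℓ) :
    Nonempty ({μ : YoungDiagram // IsCore ℓ μ ∧ μ.rowLen 0 = k} ≃
      {μ : YoungDiagram // IsCore (ℓ - 1) μ ∧ μ.rowLen 0 ≤ k}) := by
  classical
  open CoreProof in
  obtain ⟨e, rfl⟩ : ∃ e, ℓ = e + 2 := ⟨ℓ - 2, by omega⟩
  have hsub : e + 2 - 1 = e + 1 := rfl
  rw [hsub]
  have EL1 : {μ : YoungDiagram // IsCore (e+2) μ ∧ μ.rowLen 0 = k} ≃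
      {x : {μ : YoungDiagram // IsCore (e+2) μ} // x.1.rowLen 0 = k} :=
    (Equiv.subtypeSubtypeEquivSubtypeInter _ _).symm
  have EL2 : {x : {μ : YoungDiagram // IsCore (e+2) μ} // x.1.rowLen 0 = k} ≃
      {n : Fin (e+1) → ℕ // Msup n = k + (∑ i, n i) + (e+1)} := by
    refine (Equiv.ofBijective _ (toVec_bijective (e+1))).subtypeEquiv ?_
    intro x
    have hm := msup_toVec (d := e+1) x.2
    constructor
    · intro hrow
      show Msup (toVec (e+1) x.1) = k + (∑ i, toVec (e+1) x.1 i) + (e+1)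
      omega
    · intro hM
      have hM' : Msup (toVec (e+1) x.1) = k + (∑ i, toVec (e+1) x.1 i) + (e+1) := hM
      omega
  have ER1 : {μ : YoungDiagram // IsCore (e+1) μ ∧ μ.rowLen 0 ≤ k} ≃
      {x : {μ : YoungDiagram // IsCore (e+1) μ} // x.1.rowLen 0 ≤ k} :=
    (Equiv.subtypeSubtypeEquivSubtypeInter _ _).symm
  have ER2 : {x : {μ : YoungDiagram // IsCore (e+1) μ} // x.1.rowLen 0 ≤ k} ≃
      {m : Fin e → ℕ // Msup m ≤ k + (∑ j, m j) + e} := by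
    refine (Equiv.ofBijective _ (toVec_bijective e)).subtypeEquiv ?_
    intro x
    have hm := msup_toVec (d := e) x.2
    constructor
    · intro hrow
      show Msup (toVec e x.1) ≤ k + (∑ i, toVec e x.1 i) + e
      omega
    · intro hM
      have hM' : Msup (toVec e x.1) ≤ k + (∑ i, toVec e x.1 i) + e := hM
      omega
  have EV : {m : Fin e → ℕ // Msup m ≤ k + (∑ j, m j) + e} ≃
      {n : Fin (e+1) → ℕ // Msup n = k + (∑ i, n i) + (e+1)} :=
    Equiv.ofBijective _ (psi_bijective e k)
  exact ⟨EL1.trans (EL2.trans (EV.symm.trans (ER2.symm.trans ER1.symm)))⟩
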